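/- For any two non-adjacent (vertex-disjoint) edges e and f of K₃,₃, the graph obtained from K₃,₃ by subdividing e once and subdividing f once is isomorphic to Γ₈; in particular, all such graphs obtained from different choices of a pair of disjoint edges of K₃,₃ are isomorphic to one another. -/
import Mathlib


/-- The graph obtained from `G` by subdividing the edge `uw` once: the edge `uw` is
deleted, and a new vertex `x` is added together with the edges `ux` and `xw`. -/
def subdivide {V : Type} (G : SimpleGraph V) (u w : V) : SimpleGraph (V ⊕ Unit) :=
  SimpleGraph.fromEdgeSet
    ((Sym2.map Sum.inl '' (G.edgeSet \ {s(u, w)})) ∪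
      {s(Sum.inl u, Sum.inr ()), s(Sum.inr (), Sum.inl w)})

/-- `H` is a minor of `G`: `H` can be obtained from a subgraph of `G` by contracting edges.
Equivalently (branch-set formulation): there is a family of nonempty, pairwise disjoint,
connected subsets of the vertices of `G`, indexed by the vertices of `H`, such that whenever
two vertices are adjacent in `H` there is an edge of `G` between the corresponding sets. -/
def IsMinor {W V : Type} (H : SimpleGraph W) (G : SimpleGraph V) : Prop :=
  ∃ B : W → Set V,
    (∀ w, (B w).Nonempty) ∧
    (∀ w, (G.induce (B w)).Connected) ∧
    (∀ w₁ w₂, w₁ ≠ w₂ → Disjoint (B w₁) (B w₂)) ∧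
    (∀ w₁ w₂, H.Adj w₁ w₂ → ∃ u ∈ B w₁, ∃ x ∈ B w₂, G.Adj u x)

/-- The complete bipartite graph `K₃,₃`. -/
def K33 : SimpleGraph (Fin 3 ⊕ Fin 3) := completeBipartiteGraph (Fin 3) (Fin 3)

/-- The vertices of the graph `Γ₈`. -/
inductive V8 : Type
  | v1 | v2 | a1 | a2 | a3 | b1 | b2 | b3
  deriving DecidableEq

open V8

/-- The graph `Γ₈`: the hexagonal cycle `a₁a₂a₃b₁b₂b₃a₁`, the chord `a₃b₃`,
and the four edges `a₁v₁`, `v₁b₁`, `a₂v₂`, `v₂b₂`. -/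
def Gamma8 : SimpleGraph V8 :=
  SimpleGraph.fromEdgeSet
    {s(a1, a2), s(a2, a3), s(a3, b1), s(b1, b2), s(b2, b3), s(b3, a1),
     s(a3, b3),
     s(a1, v1), s(v1, b1), s(a2, v2), s(v2, b2)}

lemma subdivide_comm {V : Type} (G : SimpleGraph V) (u w : V) :
    subdivide G u w = subdivide G w u := by
  unfold subdivide
  rw [Sym2.eq_swap (a := u) (b := w), Sym2.eq_swap (a := Sum.inl u),
    Sym2.eq_swap (a := Sum.inr ()) (b := Sum.inl w), Set.pair_comm]

lemma subdivide_adj_inl_inl {V : Type} (G : SimpleGraph V) (u w a b : V) :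
    (subdivide G u w).Adj (.inl a) (.inl b) ↔ G.Adj a b ∧ s(a, b) ≠ s(u, w) := by
  simp only [subdivide, SimpleGraph.fromEdgeSet_adj, Set.mem_union, Set.mem_image,
    Set.mem_diff, Set.mem_singleton_iff, Set.mem_insert_iff, SimpleGraph.mem_edgeSet]
  constructor
  · rintro ⟨(⟨e, ⟨he, hne⟩, hmap⟩ | h | h), hab⟩
    · obtain ⟨c, d⟩ := e
      simp only [Sym2.map_pair_eq, Sym2.eq_iff] at hmap
      rcases hmap with ⟨hc, hd⟩ | ⟨hc, hd⟩
      · cases hc; cases hd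
        exact ⟨he, hne⟩
      · cases hc; cases hd
        exact ⟨he.symm, fun h => hne (Sym2.eq_swap.trans h)⟩
    · simp [Sym2.eq_iff] at h
    · simp [Sym2.eq_iff] at h
  · rintro ⟨hab, hne⟩
    exact ⟨Or.inl ⟨s(a, b), ⟨hab, hne⟩, rfl⟩, by simpa using hab.ne⟩

lemma subdivide_adj_inl_inr {V : Type} (G : SimpleGraph V) (u w a : V) :
    (subdivide G u w).Adj (.inl a) (.inr ()) ↔ a = u ∨ a = w := by
  simp only [subdivide, SimpleGraph.fromEdgeSet_adj, Set.mem_union, Set.mem_image,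
    Set.mem_insert_iff, Set.mem_singleton_iff]
  constructor
  · rintro ⟨(⟨e, _, hmap⟩ | h | h), _⟩
    · obtain ⟨c, d⟩ := e
      simp [Sym2.map_pair_eq, Sym2.eq_iff] at hmap
    · simp only [Sym2.eq_iff] at h
      rcases h with ⟨h, _⟩ | ⟨_, h⟩ <;> simp_all
    · simp only [Sym2.eq_iff] at h
      rcases h with ⟨h, _⟩ | ⟨_, h⟩ <;> simp_all
  · rintro (rfl | rfl)
    · exact ⟨Or.inr (Or.inl rfl), by simp⟩
    · exact ⟨Or.inr (Or.inr (by rw [Sym2.eq_swap])), by simp⟩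

lemma subdivide_adj_inr {V : Type} (G : SimpleGraph V) (u w : V) (x y : Unit) :
    ¬ (subdivide G u w).Adj (.inr x) (.inr y) := by
  simp [subdivide, SimpleGraph.fromEdgeSet_adj]

lemma subdivide_adj_inr_inl {V : Type} (G : SimpleGraph V) (u w b : V) :
    (subdivide G u w).Adj (.inr ()) (.inl b) ↔ b = u ∨ b = w := by
  rw [SimpleGraph.adj_comm, subdivide_adj_inl_inr]

instance subdivide.adjDecidable {V : Type} [DecidableEq V] (G : SimpleGraph V)
    [DecidableRel G.Adj] (u w : V) : DecidableRel (subdivide G u w).Adj := fun x y =>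
  match x, y with
  | .inl a, .inl b => decidable_of_iff' _ (subdivide_adj_inl_inl G u w a b)
  | .inl a, .inr () => decidable_of_iff' _ (subdivide_adj_inl_inr G u w a)
  | .inr (), .inl b => decidable_of_iff' _ (subdivide_adj_inr_inl G u w b)
  | .inr (), .inr () => isFalse (subdivide_adj_inr G u w () ())

def subdivideIso {V V' : Type} {G : SimpleGraph V} {G' : SimpleGraph V'} (e : G ≃g G')
    (u w : V) : subdivide G u w ≃g subdivide G' (e u) (e w) where
  toEquiv := Equiv.sumCongr e.toEquiv (Equiv.refl Unit)
  map_rel_iff' := by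
    rintro (a | x) (b | y) <;> try cases x
    all_goals try cases y
    · simp only [Equiv.sumCongr_apply, Sum.map_inl, subdivide_adj_inl_inl]
      show G'.Adj (e a) (e b) ∧ s(e a, e b) ≠ s(e u, e w) ↔ _
      rw [e.map_adj_iff]
      refine and_congr_right fun _ => not_congr ?_
      rw [show s(e a, e b) = Sym2.map e s(a, b) from rfl,
        show s(e u, e w) = Sym2.map e s(u, w) from rfl]
      exact ⟨fun hh => Sym2.map.injective (RelIso.injective e) hh, fun hh => by rw [hh]⟩
    · simp only [Equiv.sumCongr_apply, Sum.map_inl, Sum.map_inr, Equiv.refl_apply,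
        subdivide_adj_inl_inr]
      show e a = e u ∨ e a = e w ↔ _
      rw [(RelIso.injective e).eq_iff, (RelIso.injective e).eq_iff]
    · simp only [Equiv.sumCongr_apply, Sum.map_inl, Sum.map_inr, Equiv.refl_apply,
        subdivide_adj_inr_inl]
      show e b = e u ∨ e b = e w ↔ _
      rw [(RelIso.injective e).eq_iff, (RelIso.injective e).eq_iff]
    · simp [subdivide_adj_inr]


instance : DecidableRel K33.Adj := fun x y =>
  inferInstanceAs (Decidable (x.isLeft ∧ y.isRight ∨ x.isRight ∧ y.isLeft))

lemma Gamma8_adj (x y : V8) : Gamma8.Adj x y ↔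
    (s(x, y) = s(a1, a2) ∨ s(x, y) = s(a2, a3) ∨ s(x, y) = s(a3, b1) ∨ s(x, y) = s(b1, b2) ∨
      s(x, y) = s(b2, b3) ∨ s(x, y) = s(b3, a1) ∨ s(x, y) = s(a3, b3) ∨ s(x, y) = s(a1, v1) ∨
      s(x, y) = s(v1, b1) ∨ s(x, y) = s(a2, v2) ∨ s(x, y) = s(v2, b2)) ∧ x ≠ y := by
  simp only [Gamma8, SimpleGraph.fromEdgeSet_adj, Set.mem_insert_iff, Set.mem_singleton_iff]

instance : DecidableRel Gamma8.Adj := fun x y => decidable_of_iff' _ (Gamma8_adj x y)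

instance : Fintype V8 :=
  ⟨{v1, v2, a1, a2, a3, b1, b2, b3}, fun x => by cases x <;> decide⟩

def canonEquiv : ((Fin 3 ⊕ Fin 3) ⊕ Unit) ⊕ Unit ≃ V8 where
  toFun x := match x with
    | .inl (.inl (.inl 0)) => a1
    | .inl (.inl (.inl 1)) => b2
    | .inl (.inl (.inl 2)) => a3
    | .inl (.inl (.inr 0)) => b1
    | .inl (.inl (.inr 1)) => a2
    | .inl (.inl (.inr 2)) => b3
    | .inl (.inr ()) => v1
    | .inr () => v2
  invFun x := match x with
    | a1 => .inl (.inl (.inl 0))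
    | b2 => .inl (.inl (.inl 1))
    | a3 => .inl (.inl (.inl 2))
    | b1 => .inl (.inl (.inr 0))
    | a2 => .inl (.inl (.inr 1))
    | b3 => .inl (.inl (.inr 2))
    | v1 => .inl (.inr ())
    | v2 => .inr ()
  left_inv := by
    rintro (((a | a) | ⟨⟩) | ⟨⟩) <;> first | rfl | (fin_cases a <;> rfl)
  right_inv x := by cases x <;> rfl

def canonIso :
    (subdivide (subdivide K33 (Sum.inl 0) (Sum.inr 0)) (Sum.inl (Sum.inl 1))
      (Sum.inl (Sum.inr 1))) ≃g Gamma8 where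
  toEquiv := canonEquiv
  map_rel_iff' := by decide

def subdivideIso' {V V' : Type} {G : SimpleGraph V} {G' : SimpleGraph V'} (e : G ≃g G')
    {u w : V} {u' w' : V'} (hu : e u = u') (hw : e w = w') :
    subdivide G u w ≃g subdivide G' u' w' := hu ▸ hw ▸ subdivideIso e u w

lemma subdivideIso'_apply_inl {V V' : Type} {G : SimpleGraph V} {G' : SimpleGraph V'}
    (e : G ≃g G') {u w : V} {u' w' : V'} (hu : e u = u') (hw : e w = w') (x : V) :
    subdivideIso' e hu hw (Sum.inl x) = Sum.inl (e x) := by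
  subst hu; subst hw; rfl

def K33Auto (σ τ : Equiv.Perm (Fin 3)) : K33 ≃g K33 where
  toEquiv := Equiv.sumCongr σ τ
  map_rel_iff' := by
    rintro (a | a) (b | b) <;> simp [K33, completeBipartiteGraph]

def perm2 (a c : Fin 3) : Equiv.Perm (Fin 3) :=
  (Equiv.swap a 0).trans (Equiv.swap ((Equiv.swap a 0) c) 1)

lemma perm2_fst (a c : Fin 3) (h : a ≠ c) : perm2 a c a = 0 := by
  simp only [perm2, Equiv.trans_apply, Equiv.swap_apply_left]
  refine Equiv.swap_apply_of_ne_of_ne ?_ (by decide)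
  intro hh
  exact h ((Equiv.swap a 0).injective (by rw [Equiv.swap_apply_left]; exact hh))

lemma perm2_snd (a c : Fin 3) : perm2 a c c = 1 := by
  simp [perm2]

lemma main_aux (a b c d : Fin 3) (hac : a ≠ c) (hbd : b ≠ d) :
    Nonempty ((subdivide (subdivide K33 (Sum.inl a) (Sum.inr b)) (Sum.inl (Sum.inl c))
      (Sum.inl (Sum.inr d))) ≃g Gamma8) := by
  have e1 : (K33Auto (perm2 a c) (perm2 b d)) (Sum.inl a) = Sum.inl 0 := by
    show Sum.inl (perm2 a c a) = _
    rw [perm2_fst a c hac]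
  have e2 : (K33Auto (perm2 a c) (perm2 b d)) (Sum.inr b) = Sum.inr 0 := by
    show Sum.inr (perm2 b d b) = _
    rw [perm2_fst b d hbd]
  have e3 : (subdivideIso' (K33Auto (perm2 a c) (perm2 b d)) e1 e2) (Sum.inl (Sum.inl c)) =
      Sum.inl (Sum.inl 1) := by
    rw [subdivideIso'_apply_inl]
    show Sum.inl (Sum.inl (perm2 a c c)) = _
    rw [perm2_snd]
  have e4 : (subdivideIso' (K33Auto (perm2 a c) (perm2 b d)) e1 e2) (Sum.inl (Sum.inr d)) =
      Sum.inl (Sum.inr 1) := by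
    rw [subdivideIso'_apply_inl]
    show Sum.inl (Sum.inr (perm2 b d d)) = _
    rw [perm2_snd]
  exact ⟨(subdivideIso' (subdivideIso' (K33Auto (perm2 a c) (perm2 b d)) e1 e2) e3 e4).trans
    canonIso⟩


/-- For any two non-adjacent (vertex-disjoint) edges `e = uw` and `f = u'w'` of `K₃,₃`, the
graph obtained from `K₃,₃` by subdividing `e` once and subdividing `f` once is isomorphic
to `Γ₈`; in particular, all such graphs obtained from different choices of a pair of
disjoint edges of `K₃,₃` are isomorphic to one another. -/
theorem double_subdivision_of_K33_is_Gamma8 (u w u' w' : Fin 3 ⊕ Fin 3)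
    (he : K33.Adj u w) (hf : K33.Adj u' w')
    (h1 : u ≠ u') (h2 : u ≠ w') (h3 : w ≠ u') (h4 : w ≠ w') :
    Nonempty ((subdivide (subdivide K33 u w) (Sum.inl u') (Sum.inl w')) ≃g Gamma8) := by
  rcases u with a | a <;> rcases w with b | b <;>
    rcases u' with c | c <;> rcases w' with d | d <;>
    simp [K33] at he hf
  · exact main_aux a b c d (fun h => h1 (by rw [h])) (fun h => h4 (by rw [h]))
  · rw [subdivide_comm (subdivide K33 _ _)]
    exact main_aux a b d c (fun h => h2 (by rw [h])) (fun h => h3 (by rw [h]))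
  · rw [subdivide_comm K33]
    exact main_aux b a c d (fun h => h3 (by rw [h])) (fun h => h2 (by rw [h]))
  · rw [subdivide_comm K33, subdivide_comm (subdivide K33 _ _)]
    exact main_aux b a d c (fun h => h4 (by rw [h])) (fun h => h1 (by rw [h]))
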